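/- For every n ≥ 2 and every odd positive integer ℓ, the restriction τ_ℓ of the natural homomorphism τ : B_n → S_n (sending σ_i to (i, i+1)) to the congruence subgroup B_n[ℓ] is surjective onto S_n. -/

import Mathlib

open Matrix

/-- The braid relations on `m` generators `σ_1, …, σ_m` (0-indexed by `Fin m`). -/
def braidRels (m : ℕ) : Set (FreeGroup (Fin m)) :=
  {r | (∃ i j : Fin m, (i : ℕ) + 1 = (j : ℕ) ∧
          r = FreeGroup.of i * FreeGroup.of j * FreeGroup.of i *
              (FreeGroup.of j * FreeGroup.of i * FreeGroup.of j)⁻¹) ∨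
       (∃ i j : Fin m, (i : ℕ) + 2 ≤ (j : ℕ) ∧
          r = FreeGroup.of i * FreeGroup.of j * (FreeGroup.of j * FreeGroup.of i)⁻¹)}

/-- The braid group on `n` strands, presented on generators `σ_1, …, σ_{n-1}`. -/
def BraidGroup (n : ℕ) : Type := PresentedGroup (braidRels (n - 1))

instance (n : ℕ) : Group (BraidGroup n) :=
  inferInstanceAs (Group (PresentedGroup (braidRels (n - 1))))

/-- The generator `σ_{k+1}` (in 1-indexed notation) of the braid group. -/
def braidGen (n : ℕ) (k : Fin (n - 1)) : BraidGroup n := PresentedGroup.of k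

/-- The matrix of the generator `σ_{k+1}` under the reduced integral Burau representation. -/
def burauMatrix (n : ℕ) (k : Fin (n - 1)) : Matrix (Fin (n - 1)) (Fin (n - 1)) ℤ :=
  Matrix.of fun a b =>
    if a = b then 1
    else if (a : ℕ) + 1 = (k : ℕ) ∧ b = k then -1
    else if (a : ℕ) = (k : ℕ) + 1 ∧ b = k then 1
    else 0

/-- `ρ` is the reduced integral Burau representation iff it takes the prescribed
values on the generators. -/
def IsBurau (n : ℕ) (ρ : BraidGroup n →* GL (Fin (n - 1)) ℤ) : Prop :=
  ∀ k : Fin (n - 1),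
    (ρ (braidGen n k) : Matrix (Fin (n - 1)) (Fin (n - 1)) ℤ) = burauMatrix n k

/-- The level `ℓ` congruence subgroup `B_n[ℓ]`: the kernel of the composition of the
reduced integral Burau representation with entrywise reduction mod `ℓ`. -/
def congSubgroup (n : ℕ) (ρ : BraidGroup n →* GL (Fin (n - 1)) ℤ) (ℓ : ℕ) :
    Subgroup (BraidGroup n) :=
  ((Matrix.GeneralLinearGroup.map (Int.castRingHom (ZMod ℓ))).comp ρ).ker

instance (n : ℕ) (ρ : BraidGroup n →* GL (Fin (n - 1)) ℤ) (ℓ : ℕ) :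
    (congSubgroup n ρ ℓ).Normal :=
  MonoidHom.normal_ker _

instance (n : ℕ) (ρ : BraidGroup n →* GL (Fin (n - 1)) ℤ) (ℓ : ℕ)
    (K : Subgroup (BraidGroup n)) : ((congSubgroup n ρ ℓ).subgroupOf K).Normal :=
  Subgroup.Normal.subgroupOf (MonoidHom.normal_ker _) K

/-- The transposition `(i, i+1)` (1-indexed), i.e. `(k, k+1)` for `k : Fin (n-1)`
(0-indexed), as a permutation of the `n` strands. -/
def tauSwap (n : ℕ) (k : Fin (n - 1)) : Equiv.Perm (Fin n) :=
  Equiv.swap ⟨(k : ℕ), by have hk := k.isLt; omega⟩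
    ⟨(k : ℕ) + 1, by have hk := k.isLt; omega⟩

/-- `τ` is the natural homomorphism `B_n → S_n` iff it sends each generator `σ_i`
to the transposition `(i, i+1)`. -/
def IsTau (n : ℕ) (τ : BraidGroup n →* Equiv.Perm (Fin n)) : Prop :=
  ∀ k : Fin (n - 1), τ (braidGen n k) = tauSwap n k

lemma N_k_row (n : ℕ) (k : Fin (n - 1)) (b : Fin (n - 1)) :
    (burauMatrix n k - 1) k b = 0 := by
  simp only [burauMatrix, Matrix.sub_apply, Matrix.of_apply, Matrix.one_apply]
  split_ifs with h1 h2 h3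
  · ring
  · exact absurd h2.1 (by omega)
  · exact absurd h3.1 (by omega)
  · ring

lemma N_col (n : ℕ) (k : Fin (n - 1)) (a c : Fin (n - 1)) (hc : c ≠ k) :
    (burauMatrix n k - 1) a c = 0 := by
  simp only [burauMatrix, Matrix.sub_apply, Matrix.of_apply, Matrix.one_apply]
  split_ifs <;> simp_all

lemma NN (n : ℕ) (k : Fin (n - 1)) :
    (burauMatrix n k - 1) * (burauMatrix n k - 1) = 0 := by
  ext a b
  rw [Matrix.mul_apply, Matrix.zero_apply]
  apply Finset.sum_eq_zero
  intro c _
  by_cases h : c = k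
  · subst h; rw [N_k_row, mul_zero]
  · rw [N_col n k a c h, zero_mul]

lemma pow_one_add_sq_zero {m : ℕ} {R : Type*} [CommRing R]
    (N : Matrix (Fin m) (Fin m) R) (h : N * N = 0) (t : ℕ) :
    (1 + N) ^ t = 1 + t • N := by
  induction t with
  | zero => simp
  | succ t ih =>
    rw [pow_succ, ih, add_mul, mul_add, mul_add, one_mul, mul_one, smul_mul_assoc, h,
      smul_zero, add_zero, succ_nsmul]
    simp only [one_mul]
    abel

lemma burau_pow (n : ℕ) (k : Fin (n - 1)) (t : ℕ) :
    burauMatrix n k ^ t = 1 + t • (burauMatrix n k - 1) := by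
  conv_lhs => rw [show burauMatrix n k = 1 + (burauMatrix n k - 1) by abel]
  rw [pow_one_add_sq_zero _ (NN n k)]

/-- A subgroup of `Perm (Fin n)` containing all adjacent transpositions contains
all transpositions. -/
lemma swap_mem_of_adjacent {n : ℕ} (H : Subgroup (Equiv.Perm (Fin n)))
    (hgen : ∀ k : Fin (n - 1), tauSwap n k ∈ H) (a b : Fin n) :
    Equiv.swap a b ∈ H := by
  have key : ∀ d : ℕ, ∀ a b : Fin n, (b : ℕ) = (a : ℕ) + d + 1 → Equiv.swap a b ∈ H := by
    intro d
    induction d with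
    | zero =>
      intro a b hb
      have hbn := b.isLt
      have hk : (a : ℕ) < n - 1 := by omega
      have he : tauSwap n ⟨(a : ℕ), hk⟩ = Equiv.swap a b := by
        unfold tauSwap
        congr 1 <;> apply Fin.ext <;> simp <;> omega
      rw [← he]; exact hgen _
    | succ d ih =>
      intro a b hb
      have hbn := b.isLt
      set c : Fin n := ⟨(a : ℕ) + d + 1, by omega⟩ with hc
      have h1 : Equiv.swap a c ∈ H := ih a c rfl
      have hk : (c : ℕ) < n - 1 := by simp [hc]; omega
      have h2 : Equiv.swap c b ∈ H := by
        have he : tauSwap n ⟨(c : ℕ), hk⟩ = Equiv.swap c b := by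
          unfold tauSwap
          congr 1 <;> apply Fin.ext <;> simp [hc] <;> omega
        rw [← he]; exact hgen _
      have hac : a ≠ c := by
        intro h; apply_fun (Fin.val) at h; simp [hc] at h; omega
      have hab : a ≠ b := by
        intro h; apply_fun (Fin.val) at h; omega
      have hcomp := Equiv.swap_mul_swap_mul_swap (x := a) (y := c) (z := b) hac hab
      rw [show Equiv.swap a b = Equiv.swap b a from Equiv.swap_comm a b, ← hcomp]
      exact H.mul_mem (H.mul_mem h2 h1) h2
  rcases eq_or_ne a b with rfl | hab
  · rw [Equiv.swap_self]; exact H.one_mem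
  rcases lt_or_gt_of_ne hab with h | h
  · have hv : (a : ℕ) < (b : ℕ) := h
    exact key ((b : ℕ) - (a : ℕ) - 1) a b (by omega)
  · have hv : (b : ℕ) < (a : ℕ) := h
    rw [Equiv.swap_comm]
    exact key ((a : ℕ) - (b : ℕ) - 1) b a (by omega)

/-- For every `n ≥ 2` and every odd positive integer `ℓ`, the restriction of the
natural homomorphism `τ : B_n → S_n` to the congruence subgroup `B_n[ℓ]` is
surjective onto `S_n`. -/
theorem tau_restrict_surjective (n : ℕ) (hn : 2 ≤ n) (ℓ : ℕ) (hℓ : 0 < ℓ)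
    (hodd : Odd ℓ)
    (ρ : BraidGroup n →* GL (Fin (n - 1)) ℤ) (hρ : IsBurau n ρ)
    (τ : BraidGroup n →* Equiv.Perm (Fin n)) (hτ : IsTau n τ) :
    Function.Surjective (τ.domRestrict (congSubgroup n ρ ℓ)) := by
  set f := Int.castRingHom (ZMod ℓ) with hf
  -- each generator's ℓ-th power lies in the congruence subgroup
  have hmem : ∀ k : Fin (n - 1), (braidGen n k) ^ ℓ ∈ congSubgroup n ρ ℓ := by
    intro k
    rw [congSubgroup, MonoidHom.mem_ker, MonoidHom.comp_apply, map_pow, map_pow]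
    apply Units.ext
    rw [Units.val_pow_eq_pow_val, Units.val_one]
    have hcoe : ((Matrix.GeneralLinearGroup.map f (ρ (braidGen n k)) :
        GL (Fin (n - 1)) (ZMod ℓ)) : Matrix (Fin (n - 1)) (Fin (n - 1)) (ZMod ℓ)) =
        f.mapMatrix (burauMatrix n k) := by
      rw [← hρ k]; rfl
    rw [hcoe, ← map_pow, burau_pow, map_add, _root_.map_one,
      show f.mapMatrix (ℓ • (burauMatrix n k - 1)) = ℓ • f.mapMatrix (burauMatrix n k - 1)
        from map_nsmul f.mapMatrix.toAddMonoidHom _ _,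
      ← Nat.cast_smul_eq_nsmul (ZMod ℓ), ZMod.natCast_self, zero_smul, add_zero]
  -- τ of that power is the adjacent transposition
  have htau : ∀ k : Fin (n - 1), τ ((braidGen n k) ^ ℓ) = tauSwap n k := by
    intro k
    obtain ⟨m, rfl⟩ := hodd
    have h2 : tauSwap n k * tauSwap n k = 1 := Equiv.swap_mul_self _ _
    rw [map_pow, hτ k, pow_add, pow_one, pow_mul, sq, h2, one_pow, one_mul]
  rw [← MonoidHom.range_eq_top, eq_top_iff]
  have hgen : ∀ k : Fin (n - 1), tauSwap n k ∈ (τ.domRestrict (congSubgroup n ρ ℓ)).range :=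
    fun k => ⟨⟨(braidGen n k) ^ ℓ, hmem k⟩, htau k⟩
  rw [← Equiv.Perm.closure_isSwap]
  rw [Subgroup.closure_le]
  rintro σ ⟨a, b, -, rfl⟩
  exact swap_mem_of_adjacent _ hgen a b
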